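/- Let G = (V, E) be a finite simple graph, let x be a greedy packing of G, and let v ∈ V be a vertex with Σ_x(v) ≤ 1. Let y : V → ℝ≥0 satisfy y_u = x_u for all u ≠ v and y_v ≤ x_v + 1 − Σ_x(v). Then y is also a greedy packing of G. -/

import Mathlib

open Finset
open Classical

/-- A greedy packing of a finite simple graph `G`: a nonnegative vertex vector `x` for
which there is a (strict) linear order `p` on the vertices such that for every vertex `v`,
`x v` plus the sum of `x u` over neighbors `u` of `v` preceding `v` is at most `1`. -/
def IsGreedyPacking {V : Type*} [Fintype V] (G : SimpleGraph V) [DecidableRel G.Adj]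
    (x : V → ℝ) : Prop :=
  (∀ v : V, 0 ≤ x v) ∧
  ∃ p : V → V → Prop, IsStrictTotalOrder V p ∧
    ∀ v : V, x v + ∑ u ∈ G.neighborFinset v, (if p u v then x u else 0) ≤ 1

/-- If `x` is a greedy packing, `v` is a vertex with `Σ_x(v) ≤ 1`, and
`y` is a nonnegative vector agreeing with `x` off `v` and with
`y v ≤ x v + 1 − Σ_x(v)`, then `y` is also a greedy packing. -/
theorem greedyPacking_raise_one_vertex
    {V : Type*} [Fintype V] [DecidableEq V]
    (G : SimpleGraph V) [DecidableRel G.Adj]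
    (x : V → ℝ) (hx : IsGreedyPacking G x)
    (v : V) (hv : x v + ∑ u ∈ G.neighborFinset v, x u ≤ 1)
    (y : V → ℝ) (hy0 : ∀ u : V, 0 ≤ y u)
    (hyx : ∀ u : V, u ≠ v → y u = x u)
    (hyv : y v ≤ x v + 1 - (x v + ∑ u ∈ G.neighborFinset v, x u)) :
    IsGreedyPacking G y := by
  obtain ⟨hx0, p, hp, hpc⟩ := hx
  refine ⟨hy0, fun a b => (a ≠ v ∧ b = v) ∨ (a ≠ v ∧ b ≠ v ∧ p a b), ?_, ?_⟩
  · refine { trichotomous := ?_, irrefl := ?_, trans := ?_ }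
    · -- trichotomous
      intro a b
      refine fun h1 h2 => (?_ : ((a ≠ v ∧ b = v) ∨ (a ≠ v ∧ b ≠ v ∧ p a b)) ∨ a = b ∨
        ((b ≠ v ∧ a = v) ∨ (b ≠ v ∧ a ≠ v ∧ p b a))).elim (fun h => absurd h h1)
        (fun h => h.elim id (fun h => absurd h h2))
      by_cases ha : a = v
      · by_cases hb : b = v
        · exact Or.inr (Or.inl (ha.trans hb.symm))
        · exact Or.inr (Or.inr (Or.inl ⟨hb, ha⟩))
      · by_cases hb : b = v
        · exact Or.inl (Or.inl ⟨ha, hb⟩)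
        · rcases ((Classical.em (p a b)).elim Or.inl fun h1 => (Classical.em (p b a)).elim (Or.inr ∘ Or.inr) fun h2 => Or.inr (Or.inl (hp.trichotomous a b h1 h2)) : p a b ∨ a = b ∨ p b a) with h | h | h
          · exact Or.inl (Or.inr ⟨ha, hb, h⟩)
          · exact Or.inr (Or.inl h)
          · exact Or.inr (Or.inr (Or.inr ⟨hb, ha, h⟩))
    · intro a h
      rcases h with ⟨h1, h2⟩ | ⟨_, _, h⟩
      · exact h1 h2
      · exact hp.irrefl a h
    · intro a b c hab hbc
      rcases hab with ⟨ha, hb⟩ | ⟨ha, hb, hab⟩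
      · rcases hbc with ⟨hb', hc⟩ | ⟨hb', _, _⟩ <;> exact absurd hb hb'
      · rcases hbc with ⟨_, hc⟩ | ⟨_, hc, hbc⟩
        · exact Or.inl ⟨ha, hc⟩
        · exact Or.inr ⟨ha, hc, hp.trans a b c hab hbc⟩
  · intro w
    beta_reduce
    by_cases hw : w = v
    · subst hw
      refine le_trans (add_le_add hyv (Finset.sum_le_sum fun u hu => ?_)) (by linarith)
      split_ifs with hc
      · rcases hc with ⟨hne, _⟩ | ⟨hne, _, _⟩ <;> exact le_of_eq (hyx u hne)
      · exact hx0 u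
    · rw [hyx w hw]
      refine le_trans (add_le_add_right (Finset.sum_le_sum fun u hu => ?_) (x w)) (hpc w)
      split_ifs with hc hpw
      · rcases hc with ⟨_, hwv⟩ | ⟨hne, _, _⟩
        · exact absurd hwv hw
        · exact le_of_eq (hyx u hne)
      · rcases hc with ⟨_, hwv⟩ | ⟨_, _, hpuw⟩
        · exact absurd hwv hw
        · exact absurd hpuw hpw
      · exact hx0 u
      · exact le_refl 0
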